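/- Let (Ω, F, P) be a probability space, c > 0, and let (V_n)_{n ≥ 1} be square-integrable real random variables on Ω such that 0 ≤ V_n(ω) ≤ V_{n+1}(ω) for all n and all ω, E[V_n] = c·n·log n + O(n), and Var(V_n) = O(n²) as n → ∞. Then V_n/(n·log n) → c P-almost surely. -/

import Mathlib

open Filter MeasureTheory ProbabilityTheory

namespace ASConv


noncomputable def ee (k : ℕ) : ℝ := (k : ℝ) ^ (3/4 : ℝ)
noncomputable def NN (k : ℕ) : ℕ := ⌈Real.exp (ee k)⌉₊
noncomputable def dd (k : ℕ) : ℝ := (NN k : ℝ) * Real.log (NN k)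

lemma ee_nonneg (k : ℕ) : 0 ≤ ee k := Real.rpow_nonneg (Nat.cast_nonneg k) _

lemma ee_mono : Monotone ee := fun a b h =>
  Real.rpow_le_rpow (Nat.cast_nonneg a) (Nat.cast_le.2 h) (by norm_num)

lemma ee_tendsto : Tendsto ee atTop atTop :=
  (tendsto_rpow_atTop (by norm_num : (0:ℝ) < 3/4)).comp tendsto_natCast_atTop_atTop

lemma one_le_ee {k : ℕ} (hk : 1 ≤ k) : 1 ≤ ee k := by
  have : ee 1 ≤ ee k := ee_mono hk
  simpa [ee] using this

lemma ee_pos {k : ℕ} (hk : 1 ≤ k) : 0 < ee k := lt_of_lt_of_le one_pos (one_le_ee hk)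

lemma exp_le_NN (k : ℕ) : Real.exp (ee k) ≤ (NN k : ℝ) := Nat.le_ceil _

lemma NN_le (k : ℕ) : (NN k : ℝ) ≤ Real.exp (ee k) + 1 :=
  (Nat.ceil_lt_add_one (Real.exp_pos _).le).le

lemma NN_pos (k : ℕ) : 0 < NN k := Nat.ceil_pos.2 (Real.exp_pos _)

lemma NN_mono : Monotone NN := fun a b h =>
  Nat.ceil_le_ceil (Real.exp_le_exp.2 (ee_mono h))

lemma two_le_NN {k : ℕ} (hk : 1 ≤ k) : 2 ≤ NN k := by
  have h1 : (2:ℝ) ≤ Real.exp (ee k) := by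
    have := Real.add_one_le_exp (ee k)
    have := one_le_ee hk
    linarith
  have := h1.trans (exp_le_NN k)
  exact_mod_cast this

lemma ee_le_log (k : ℕ) : ee k ≤ Real.log (NN k) :=
  (Real.le_log_iff_exp_le (by exact_mod_cast NN_pos k)).2 (exp_le_NN k)

lemma log_NN_le (k : ℕ) : Real.log (NN k) ≤ ee k + 1 := by
  have h : (NN k : ℝ) ≤ Real.exp (ee k + 1) := by
    rw [Real.exp_add]
    have h2 : (2:ℝ) ≤ Real.exp 1 := by
      have := Real.add_one_le_exp (1:ℝ); linarith
    have h3 : Real.exp (ee k) + 1 ≤ Real.exp (ee k) * 2 := by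
      have := Real.exp_pos (ee k)
      have h1 : (1:ℝ) ≤ Real.exp (ee k) := Real.one_le_exp (ee_nonneg k)
      nlinarith
    exact (NN_le k).trans (h3.trans (by nlinarith [Real.exp_pos (ee k)]))
  exact (Real.log_le_iff_le_exp (by exact_mod_cast NN_pos k)).2 h

lemma self_le_NN_sq (j : ℕ) : j ≤ (NN j) ^ 2 := by
  rcases Nat.eq_zero_or_pos j with rfl | hj
  · simp
  have hj1 : (1:ℝ) ≤ (j:ℝ) := by exact_mod_cast hj
  have hs : Real.sqrt j ≤ Real.exp (ee j) := by
    rw [← Real.exp_log (Real.sqrt_pos.2 (by linarith : (0:ℝ) < j))]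
    apply Real.exp_le_exp.2
    have h1 : Real.log (Real.sqrt j) ≤ Real.sqrt j - 1 :=
      Real.log_le_sub_one_of_pos (Real.sqrt_pos.2 (by linarith))
    have h2 : Real.sqrt j ≤ ee j := by
      rw [Real.sqrt_eq_rpow]
      exact Real.rpow_le_rpow_of_exponent_le hj1 (by norm_num)
    linarith
  have hs2 : Real.sqrt j ≤ (NN j : ℝ) := hs.trans (exp_le_NN j)
  have : (j:ℝ) ≤ ((NN j : ℝ)) ^ 2 := by
    have := Real.sq_sqrt (by linarith : (0:ℝ) ≤ (j:ℝ))
    nlinarith [Real.sqrt_nonneg (j:ℝ)]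
  exact_mod_cast this

lemma dd_pos {k : ℕ} (hk : 1 ≤ k) : 0 < dd k := by
  have h2 : (2:ℝ) ≤ (NN k : ℝ) := by exact_mod_cast two_le_NN hk
  exact mul_pos (by linarith) (Real.log_pos (by linarith))

lemma dd_mono_of (a b : ℕ) (ha : 1 ≤ a) (hab : a ≤ b) : dd a ≤ dd b := by
  have h2 : (2:ℝ) ≤ (NN a : ℝ) := by exact_mod_cast two_le_NN ha
  have hN : (NN a : ℝ) ≤ (NN b : ℝ) := by exact_mod_cast NN_mono hab
  have hl : Real.log (NN a) ≤ Real.log (NN b) := Real.log_le_log (by linarith) hN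
  have hl0 : 0 ≤ Real.log (NN a) := Real.log_nonneg (by linarith)
  unfold dd; nlinarith



-- δ k = ee (k+1) - ee k → 0, with explicit bound
lemma delta_le {k : ℕ} (hk : 1 ≤ k) :
    ee (k + 1) - ee k ≤ (3/4) * (k : ℝ) ^ (-(1/4) : ℝ) := by
  have hk0 : (0:ℝ) < (k:ℝ) := by exact_mod_cast hk
  have hsplit : ((k:ℝ) + 1) = (k:ℝ) * (1 + 1/(k:ℝ)) := by field_simp
  have h1 : ee (k+1) = (k:ℝ) ^ (3/4:ℝ) * (1 + 1/(k:ℝ)) ^ (3/4:ℝ) := by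
    rw [ee, Nat.cast_add, Nat.cast_one, hsplit,
      Real.mul_rpow hk0.le (by positivity)]
  have hb : (1 + 1/(k:ℝ)) ^ (3/4:ℝ) ≤ 1 + (3/4) * (1/(k:ℝ)) :=
    rpow_one_add_le_one_add_mul_self ((by norm_num : (-1:ℝ) ≤ 0).trans (by positivity)) (by norm_num) (by norm_num)
  have h2 : ee (k+1) ≤ (k:ℝ)^(3/4:ℝ) + (3/4) * ((k:ℝ)^(3/4:ℝ) * (1/(k:ℝ))) := by
    rw [h1]
    have hp : (0:ℝ) ≤ (k:ℝ)^(3/4:ℝ) := Real.rpow_nonneg hk0.le _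
    nlinarith
  have h3 : (k:ℝ)^(3/4:ℝ) * (1/(k:ℝ)) = (k:ℝ) ^ (-(1/4):ℝ) := by
    rw [one_div, ← Real.rpow_neg_one, ← Real.rpow_add hk0]
    norm_num
  rw [h3] at h2
  have : ee k = (k:ℝ)^(3/4:ℝ) := rfl
  linarith

lemma delta_tendsto : Tendsto (fun k => ee (k+1) - ee k) atTop (nhds 0) := by
  apply squeeze_zero' (g := fun k : ℕ => (3/4) * (k : ℝ) ^ (-(1/4) : ℝ))
  · filter_upwards [] with k
    have := ee_mono (Nat.le_succ k); linarith
  · filter_upwards [eventually_ge_atTop 1] with k hk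
    exact delta_le hk
  · have h0 : Tendsto (fun k : ℕ => (k : ℝ) ^ (-(1/4) : ℝ)) atTop (nhds 0) :=
      (tendsto_rpow_neg_atTop (by norm_num : (0:ℝ) < 1/4)).comp
        tendsto_natCast_atTop_atTop
    simpa using h0.const_mul (3/4 : ℝ)

lemma prodform_tendsto :
    Tendsto (fun k => (Real.exp (ee (k+1) - ee k) + Real.exp (-(ee k))) *
      ((ee (k+1) - ee k + 1) / ee k + 1)) atTop (nhds 1) := by
  have h1 : Tendsto (fun k => Real.exp (ee (k+1) - ee k)) atTop (nhds 1) := by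
    have := (Real.continuous_exp.tendsto 0).comp delta_tendsto
    simpa [Function.comp_def] using this
  have h2 : Tendsto (fun k => Real.exp (-(ee k))) atTop (nhds 0) :=
    Real.tendsto_exp_neg_atTop_nhds_zero.comp ee_tendsto
  have h3 : Tendsto (fun k => (ee (k+1) - ee k + 1) / ee k) atTop (nhds 0) :=
    Tendsto.div_atTop (by simpa using delta_tendsto.add tendsto_const_nhds) ee_tendsto
  have h4 : Tendsto (fun k => (ee (k + 1) - ee k + 1) / ee k + 1) atTop (nhds (0+1)) :=
    h3.add tendsto_const_nhds
  have := (h1.add h2).mul h4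
  norm_num at this
  exact this


lemma one_le_ratio {k : ℕ} (hk : 1 ≤ k) : 1 ≤ dd (k+1) / dd k :=
  (one_le_div (dd_pos hk)).2 (dd_mono_of k (k+1) hk (Nat.le_succ k))

lemma ratio_le {k : ℕ} (hk : 1 ≤ k) :
    dd (k+1) / dd k ≤ (Real.exp (ee (k+1) - ee k) + Real.exp (-(ee k))) *
      ((ee (k+1) - ee k + 1) / ee k + 1) := by
  have hek : 0 < ee k := ee_pos hk
  have hexpk : 0 < Real.exp (ee k) := Real.exp_pos _
  have hnum : dd (k+1) ≤ (Real.exp (ee (k+1)) + 1) * (ee (k+1) + 1) := by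
    have hl0 : (0:ℝ) ≤ Real.log (NN (k+1)) := by
      have h2 : (2:ℝ) ≤ (NN (k+1) : ℝ) := by exact_mod_cast two_le_NN (by omega : 1 ≤ k+1)
      exact Real.log_nonneg (by linarith)
    have := NN_le (k+1)
    have := log_NN_le (k+1)
    have : (0:ℝ) ≤ (NN (k+1) : ℝ) := by positivity
    unfold dd
    nlinarith [NN_le (k+1), log_NN_le (k+1), Real.exp_pos (ee (k+1))]
  have hden : Real.exp (ee k) * ee k ≤ dd k := by
    unfold dd
    exact mul_le_mul (exp_le_NN k) (ee_le_log k) hek.le (Nat.cast_nonneg _)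
  have hdenpos : 0 < Real.exp (ee k) * ee k := mul_pos hexpk hek
  have step : dd (k+1) / dd k ≤
      ((Real.exp (ee (k+1)) + 1) * (ee (k+1) + 1)) / (Real.exp (ee k) * ee k) :=
    div_le_div₀ (mul_nonneg (by positivity) (by nlinarith [ee_nonneg (k+1)])) hnum hdenpos hden
  refine step.trans (le_of_eq ?_)
  rw [Real.exp_sub, Real.exp_neg]
  field_simp [hexpk.ne', hek.ne']
  try ring
  try tauto

lemma ratio_tendsto : Tendsto (fun k => dd (k+1) / dd k) atTop (nhds 1) := by
  refine tendsto_of_tendsto_of_tendsto_of_le_of_le'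
    (tendsto_const_nhds : Tendsto (fun _ : ℕ => (1:ℝ)) atTop (nhds 1))
    prodform_tendsto ?_ ?_
  · filter_upwards [eventually_ge_atTop 1] with k hk using one_le_ratio hk
  · filter_upwards [eventually_ge_atTop 1] with k hk using ratio_le hk


-- monotonicity of n ↦ n log n on naturals ≥ 2 (only need one side ≥ 2)
lemma nlogn_mono {a b : ℕ} (ha : 2 ≤ a) (hab : a ≤ b) :
    (a:ℝ) * Real.log a ≤ (b:ℝ) * Real.log b := by
  have ha2 : (2:ℝ) ≤ (a:ℝ) := by exact_mod_cast ha
  have hab' : (a:ℝ) ≤ (b:ℝ) := by exact_mod_cast hab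
  have hl : Real.log a ≤ Real.log b := Real.log_le_log (by linarith) hab'
  have hl0 : 0 ≤ Real.log a := Real.log_nonneg (by linarith)
  nlinarith

lemma sandwich {c : ℝ} (f : ℕ → ℝ) (hf0 : ∀ n, 0 ≤ f n) (hfstep : ∀ n, f n ≤ f (n+1))
    (ha : Tendsto (fun k => f (NN k) / dd k) atTop (nhds c)) :
    Tendsto (fun n : ℕ => f n / ((n:ℝ) * Real.log n)) atTop (nhds c) := by
  classical
  have hfm : Monotone f := monotone_nat_of_le_succ hfstep
  set kk : ℕ → ℕ := fun n => Nat.findGreatest (fun j => NN j ≤ n) (n^2) with hkk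
  have hsq1 : ∀ n : ℕ, NN 1 ≤ n → 1 ≤ n^2 := by
    intro n hn
    have := (two_le_NN le_rfl).trans hn
    nlinarith
  have hk1 : ∀ n : ℕ, NN 1 ≤ n → 1 ≤ kk n := fun n hn =>
    Nat.le_findGreatest (hsq1 n hn) hn
  have hspec : ∀ n : ℕ, NN 1 ≤ n → NN (kk n) ≤ n := fun n hn =>
    Nat.findGreatest_spec (P := fun j => NN j ≤ n) (hsq1 n hn) hn
  have hlt : ∀ n : ℕ, NN 1 ≤ n → n < NN (kk n + 1) := by
    intro n hn
    by_contra h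
    push_neg at h
    have hb : kk n + 1 ≤ n^2 :=
      le_trans (self_le_NN_sq (kk n + 1)) (Nat.pow_le_pow_left h 2)
    exact Nat.findGreatest_is_greatest (lt_add_one _) hb h
  have hktop : Tendsto kk atTop atTop := by
    refine tendsto_atTop_atTop.2 fun K => ⟨max (NN K) (NN 1), fun n hn => ?_⟩
    have h1 : NN K ≤ n := le_trans (le_max_left _ _) hn
    have hKn : K ≤ n^2 := le_trans (self_le_NN_sq K) (Nat.pow_le_pow_left h1 2)
    exact Nat.le_findGreatest hKn h1
  -- upper and lower comparison sequences
  have hU : Tendsto (fun k => f (NN (k+1)) / dd k) atTop (nhds c) := by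
    have h1 : Tendsto (fun k => (f (NN (k+1)) / dd (k+1)) * (dd (k+1) / dd k))
        atTop (nhds (c * 1)) :=
      (ha.comp (tendsto_add_atTop_nat 1)).mul ratio_tendsto
    rw [mul_one] at h1
    refine h1.congr' ?_
    filter_upwards [eventually_ge_atTop 1] with k hk
    have h2 : dd (k+1) ≠ 0 := (dd_pos (by omega)).ne'
    field_simp
  have hL : Tendsto (fun k => f (NN k) / dd (k+1)) atTop (nhds c) := by
    have h1 : Tendsto (fun k => (f (NN k) / dd k) / (dd (k+1) / dd k))
        atTop (nhds (c / 1)) := ha.div ratio_tendsto one_ne_zero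
    rw [div_one] at h1
    refine h1.congr' ?_
    filter_upwards [eventually_ge_atTop 1] with k hk
    have h2 : dd k ≠ 0 := (dd_pos hk).ne'
    have h3 : dd (k+1) ≠ 0 := (dd_pos (by omega)).ne'
    field_simp
  refine tendsto_of_tendsto_of_tendsto_of_le_of_le' (hL.comp hktop) (hU.comp hktop) ?_ ?_
  · filter_upwards [eventually_ge_atTop (NN 1)] with n hn
    have hk1n := hk1 n hn
    have hNl := hspec n hn
    have hNu : n ≤ NN (kk n + 1) := (hlt n hn).le
    have h2k : 2 ≤ NN (kk n) := two_le_NN hk1n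
    have h2n : 2 ≤ n := le_trans h2k hNl
    have hnpos : (0:ℝ) < (n:ℝ) * Real.log n := by
      have h2n' : (2:ℝ) ≤ (n:ℝ) := by exact_mod_cast h2n
      exact mul_pos (by linarith) (Real.log_pos (by linarith))
    have hden : (n:ℝ) * Real.log n ≤ dd (kk n + 1) := nlogn_mono h2n hNu
    exact div_le_div₀ (hf0 n) (hfm hNl) hnpos hden
  · filter_upwards [eventually_ge_atTop (NN 1)] with n hn
    have hk1n := hk1 n hn
    have hNl := hspec n hn
    have hNu : n ≤ NN (kk n + 1) := (hlt n hn).le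
    have h2k : 2 ≤ NN (kk n) := two_le_NN hk1n
    have h2n : 2 ≤ n := le_trans h2k hNl
    have hden : dd (kk n) ≤ (n:ℝ) * Real.log n := nlogn_mono h2k hNl
    exact div_le_div₀ (hf0 _) (hfm hNu) (dd_pos hk1n) hden

lemma ee_sq (k : ℕ) : (ee k) ^ 2 = (k : ℝ) ^ (3/2 : ℝ) := by
  rw [ee, ← Real.rpow_natCast ((k:ℝ) ^ (3/4:ℝ)) 2, ← Real.rpow_mul (Nat.cast_nonneg k)]
  norm_num


end ASConv

open ASConv

/-- If `(V_n)` are nondecreasing nonnegative square-integrable random variables with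
`E[V_n] = c·n·log n + O(n)` and `Var(V_n) = O(n²)`, then `V_n/(n·log n) → c` a.s. -/
theorem as_convergence_of_expectation_variance
    {Ω : Type*} [MeasureSpace Ω] [IsProbabilityMeasure (ℙ : Measure Ω)]
    (c : ℝ) (hc : 0 < c) (V : ℕ → Ω → ℝ)
    (hL2 : ∀ n : ℕ, 1 ≤ n → MemLp (V n) 2 ℙ)
    (hnonneg : ∀ n : ℕ, ∀ ω : Ω, 0 ≤ V n ω)
    (hmono : ∀ n : ℕ, ∀ ω : Ω, V n ω ≤ V (n + 1) ω)
    (hexp : ∃ C > 0, ∀ n : ℕ, 2 ≤ n →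
      |(∫ ω, V n ω) - c * n * Real.log n| ≤ C * n)
    (hvar : ∃ C' > 0, ∀ n : ℕ, 1 ≤ n → variance (V n) ℙ ≤ C' * (n : ℝ) ^ 2) :
    ∀ᵐ ω, Tendsto (fun n : ℕ => V n ω / ((n : ℝ) * Real.log n)) atTop (nhds c) := by
  obtain ⟨C, hCpos, hE⟩ := hexp
  obtain ⟨C', hC'pos, hVar⟩ := hvar
  set Ek : ℕ → ℝ := fun k => ∫ ω, V (NN k) ω with hEkdef
  -- Step 1: normalized expectations converge to c along the subsequence
  have hEd : Tendsto (fun k => Ek k / dd k) atTop (nhds c) := by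
    have key : ∀ k : ℕ, 1 ≤ k → |Ek k / dd k - c| ≤ C / ee k := by
      intro k hk
      have h2 : 2 ≤ NN k := two_le_NN hk
      have h2' : (2:ℝ) ≤ (NN k : ℝ) := by exact_mod_cast h2
      have hdk : 0 < dd k := dd_pos hk
      have hlog : 0 < Real.log (NN k) := Real.log_pos (by linarith)
      have hek : 0 < ee k := ee_pos hk
      have hEbound := hE (NN k) h2
      have heq : Ek k / dd k - c = (Ek k - c * (NN k) * Real.log (NN k)) / dd k := by
        rw [dd] at hdk ⊢
        field_simp
      rw [heq, abs_div, abs_of_pos hdk]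
      calc |Ek k - c * (NN k) * Real.log (NN k)| / dd k
          ≤ C * (NN k) / dd k := div_le_div₀ (by positivity) hEbound hdk le_rfl
        _ = C / Real.log (NN k) := by
            rw [dd]
            rw [div_eq_div_iff (by positivity) hlog.ne']
            ring
        _ ≤ C / ee k := div_le_div_of_nonneg_left hCpos.le hek (ee_le_log k)
    have hgt : Tendsto (fun k : ℕ => C / ee k) atTop (nhds 0) :=
      Tendsto.div_atTop tendsto_const_nhds ee_tendsto
    have h0 : Tendsto (fun k => Ek k / dd k - c) atTop (nhds 0) :=
      squeeze_zero_norm'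
        (by filter_upwards [eventually_ge_atTop 1] with k hk using key k hk) hgt
    have := h0.add (tendsto_const_nhds : Tendsto (fun _ : ℕ => c) atTop (nhds c))
    simpa using this
  -- Step 2: Borel-Cantelli
  have hBC : ∀ m : ℕ, ∀ᵐ ω, ∀ᶠ k in atTop,
      |V (NN (k+1)) ω - Ek (k+1)| < dd (k+1) / ((m:ℝ)+1) := by
    intro m
    set M : ℝ := (m:ℝ) + 1 with hM
    have hMpos : 0 < M := by positivity
    set A : ℕ → Set Ω := fun k => {ω | dd (k+1) / M ≤ |V (NN (k+1)) ω - Ek (k+1)|} with hA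
    have hbound : ∀ k : ℕ, ℙ (A k) ≤
        ENNReal.ofReal (C' * M^2 * (((k:ℝ)+1) ^ (3/2:ℝ))⁻¹) := by
      intro k
      have hk1 : 1 ≤ k + 1 := by omega
      have hN1 : 1 ≤ NN (k+1) := le_trans (by norm_num) (two_le_NN hk1)
      have hdpos : 0 < dd (k+1) := dd_pos hk1
      have hcheb := meas_ge_le_variance_div_sq (μ := ℙ)
        (hL2 (NN (k+1)) hN1) (div_pos hdpos hMpos)
      refine le_trans hcheb (ENNReal.ofReal_le_ofReal ?_)
      -- real inequality
      have hNR : (2:ℝ) ≤ (NN (k+1) : ℝ) := by exact_mod_cast two_le_NN hk1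
      have hlog : 0 < Real.log (NN (k+1)) := Real.log_pos (by linarith)
      have hek : 0 < ee (k+1) := ee_pos hk1
      have hs : (0:ℝ) < ((k:ℝ)+1) ^ (3/2:ℝ) := Real.rpow_pos_of_pos (by positivity) _
      have hlog2 : ((k:ℝ)+1) ^ (3/2:ℝ) ≤ (Real.log (NN (k+1)))^2 := by
        have h1 : (ee (k+1))^2 ≤ (Real.log (NN (k+1)))^2 := by
          have := ee_le_log (k+1)
          nlinarith
        have h2 := ee_sq (k+1)
        push_cast at h2
        linarith
      calc variance (V (NN (k+1))) ℙ / (dd (k+1) / M)^2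
          ≤ (C' * (NN (k+1):ℝ)^2) /
              ((NN (k+1):ℝ)^2 * (((k:ℝ)+1) ^ (3/2:ℝ)) / M^2) := by
            apply div_le_div₀ (by positivity) (hVar _ hN1) (by positivity)
            rw [div_pow, dd, mul_pow]
            apply div_le_div_of_nonneg_right ?_ (by positivity)
            exact mul_le_mul_of_nonneg_left hlog2 (by positivity)
        _ = C' * M^2 * (((k:ℝ)+1) ^ (3/2:ℝ))⁻¹ := by
            field_simp
    have hsummable : Summable (fun k : ℕ => C' * M^2 * (((k:ℝ)+1) ^ (3/2:ℝ))⁻¹) := by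
      have h1 : Summable (fun n : ℕ => 1 / (n:ℝ) ^ (3/2:ℝ)) :=
        Real.summable_one_div_nat_rpow.2 (by norm_num)
      have h2 : Summable (fun k : ℕ => 1 / (((k:ℕ):ℝ)+1) ^ (3/2:ℝ)) := by
        have h3 := (summable_nat_add_iff 1).2 h1
        refine h3.congr fun k => ?_
        push_cast
        ring_nf
      have h4 := h2.mul_left (C' * M^2)
      refine h4.congr fun k => ?_
      rw [one_div]
    have htsum : ∑' k, ℙ (A k) ≠ ⊤ := by
      apply ne_top_of_le_ne_top _ (ENNReal.tsum_le_tsum hbound)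
      rw [← ENNReal.ofReal_tsum_of_nonneg
        (fun k => mul_nonneg (mul_nonneg hC'pos.le (by positivity)) (by positivity))
        hsummable]
      exact ENNReal.ofReal_ne_top
    filter_upwards [MeasureTheory.ae_eventually_notMem htsum] with ω hω
    filter_upwards [hω] with k hk
    exact not_le.1 hk
  -- Step 3: pointwise conclusion
  have hae : ∀ᵐ ω, ∀ m : ℕ, ∀ᶠ k in atTop,
      |V (NN (k+1)) ω - Ek (k+1)| < dd (k+1) / ((m:ℝ)+1) := ae_all_iff.2 hBC
  filter_upwards [hae] with ω hω
  apply sandwich (fun n => V n ω) (fun n => hnonneg n ω) (fun n => hmono n ω)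
  have hdiff : Tendsto (fun k => (V (NN k) ω - Ek k) / dd k) atTop (nhds 0) := by
    rw [NormedAddCommGroup.tendsto_nhds_zero]
    intro ε hε
    obtain ⟨m, hm⟩ := exists_nat_one_div_lt hε
    obtain ⟨a, ha⟩ := eventually_atTop.1 (hω m)
    rw [eventually_atTop]
    refine ⟨a + 1, fun K hK => ?_⟩
    have hK1 : 1 ≤ K := by omega
    have hb := ha (K - 1) (by omega)
    rw [show K - 1 + 1 = K by omega] at hb
    have hdK : 0 < dd K := dd_pos hK1
    have h1 : ‖(V (NN K) ω - Ek K) / dd K‖ = |V (NN K) ω - Ek K| / dd K := by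
      rw [Real.norm_eq_abs, abs_div, abs_of_pos hdK]
    rw [h1]
    have h2 : |V (NN K) ω - Ek K| / dd K < (dd K / ((m:ℝ)+1)) / dd K :=
      (div_lt_div_iff_of_pos_right hdK).2 hb
    have h3 : (dd K / ((m:ℝ)+1)) / dd K = 1 / ((m:ℝ)+1) := by
      rw [div_right_comm, div_self hdK.ne']
    rw [h3] at h2
    exact lt_trans h2 hm
  have hsum2 := hdiff.add hEd
  rw [zero_add] at hsum2
  refine hsum2.congr fun k => ?_
  rw [← add_div]
  ring_nf
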